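/- Let X be an integer-valued random variable with finite variance Var(X). Then M(X) ≥ 1/√(1 + 12·Var(X)); equivalently, 1 ≤ N_∞(X) ≤ 1 + 12·Var(X). (Theorem 1.1, lower bound / Corollary 3.2.) -/

import Mathlib

open MeasureTheory ProbabilityTheory Real

/-- The probability mass function of an integer-valued random variable `X`
on a probability space `(Ω, μ)`: `f(k) = P{X = k}`. -/
noncomputable def pmfOf {Ω : Type*} [MeasurableSpace Ω] (μ : Measure Ω) (X : Ω → ℤ)
    (k : ℤ) : ℝ :=
  (μ (X ⁻¹' {k})).toReal

/-- A probability function `f : ℤ → ℝ` is discrete log-concave: it is non-negative,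
its support is an integer interval, and `f(k)^2 ≥ f(k-1)·f(k+1)` for all `k`. -/
def IsDiscreteLogConcavePMF (f : ℤ → ℝ) : Prop :=
  (∀ k : ℤ, 0 ≤ f k) ∧
  (∀ k l m : ℤ, k ≤ l → l ≤ m → 0 < f k → 0 < f m → 0 < f l) ∧
  (∀ k : ℤ, f (k - 1) * f (k + 1) ≤ f k ^ 2)

/-- `M(X) = sup_{k ∈ ℤ} P{X = k}`. -/
noncomputable def maxProb {Ω : Type*} [MeasurableSpace Ω] (μ : Measure Ω) (X : Ω → ℤ) : ℝ :=
  ⨆ k : ℤ, pmfOf μ X k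


private lemma keyMUV (M u v : ℝ) (h1 : 0 ≤ u) (h2 : u ≤ M) (hM1 : M ≤ 1) (hu1 : u ≤ 1) :
    0 ≤ 2*u^3 - 3*u^2 + 6*M*u - 6*M*u^2 + 4*M^2*u + 12*M^2*v^2 - 12*M*u*v + 12*M*u^2*v - 12*M^2*u*v := by
  have hid : 2*u^3 - 3*u^2 + 6*M*u - 6*M*u^2 + 4*M^2*u + 12*M^2*v^2 - 12*M*u*v + 12*M*u^2*v - 12*M^2*u*v
      = 3*(2*M*v - u*(1-u+M))^2 + u*(M-u)*((1-u)*(6-2*u) + u^2 + M*(4-3*u)) := by ring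
  rw [hid]
  have h3 : (0:ℝ) ≤ (1-u)*(6-2*u) + u^2 + M*(4-3*u) := by nlinarith
  have := mul_nonneg (mul_nonneg h1 (sub_nonneg.2 h2)) h3
  nlinarith [sq_nonneg (2*M*v - u*(1-u+M))]

private lemma keyFinal (M n p : ℝ) (hM : 0 < M) (hM1 : M ≤ 1) (hn1 : 1 ≤ n)
    (hnM : n*M ≤ 1) (hnM2 : 1 ≤ (n+1)*M) (hp1 : n/2 - 1 ≤ p) (hp2 : p ≤ n/2) :
    (1-M^2)/(12*M^2) ≤ min ((p+1)^2) ((n-p)^2) * (1-n*M)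
      + M*(n*p^2 - n*(n-1)*p + n*(n-1)*(2*n-1)/6) := by
  have hM2 : (0:ℝ) < 12*M^2 := by positivity
  have hu1' : 1 - n*M ≤ 1 := by nlinarith
  have h1 : 0 ≤ 1 - n*M := by linarith
  have h2 : 1 - n*M ≤ M := by nlinarith
  rw [div_le_iff₀ hM2]
  rcases le_total p ((n-1)/2) with hc | hc
  · have hmin : min ((p+1)^2) ((n-p)^2) = (p+1)^2 := by
      apply min_eq_left; nlinarith
    rw [hmin]
    have hF := keyMUV M (1-n*M) ((n+1)/2 - (p+1)) h1 h2 hM1 hu1'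
    nlinarith [hF, sq_nonneg M]
  · have hmin : min ((p+1)^2) ((n-p)^2) = (n-p)^2 := by
      apply min_eq_right; nlinarith
    rw [hmin]
    have hF := keyMUV M (1-n*M) ((n+1)/2 - (n-p)) h1 h2 hM1 hu1'
    nlinarith [hF, sq_nonneg M]

private lemma sumsq (n : ℕ) (x : ℝ) :
    ∑ j ∈ Finset.range n, ((j:ℝ) - x)^2
      = (n:ℝ)*x^2 - (n:ℝ)*((n:ℝ)-1)*x + (n:ℝ)*((n:ℝ)-1)*(2*(n:ℝ)-1)/6 := by
  induction n with
  | zero => simp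
  | succ n ih =>
    rw [Finset.sum_range_succ, ih]
    push_cast
    ring

lemma endgame (M V : ℝ) (hM : 0 < M) (hV0 : 0 ≤ V)
    (hdual : (1-M^2)/(12*M^2) ≤ V) : 1 / Real.sqrt (1 + 12*V) ≤ M := by
  have hM2pos : (0:ℝ) < 12*M^2 := by positivity
  have h12 : 1 ≤ M^2 * (1 + 12*V) := by
    rw [div_le_iff₀ hM2pos] at hdual
    nlinarith
  have hpos : (0:ℝ) < 1 + 12*V := by linarith
  rw [div_le_iff₀ (Real.sqrt_pos.2 hpos)]
  have hsqrt : 1/M ≤ Real.sqrt (1 + 12*V) := by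
    rw [show (1/M : ℝ) = Real.sqrt ((1/M)^2) from (Real.sqrt_sq (by positivity)).symm]
    apply Real.sqrt_le_sqrt
    rw [div_pow, div_le_iff₀ (by positivity)]
    nlinarith
  calc (1:ℝ) = M * (1/M) := by field_simp
    _ ≤ M * Real.sqrt (1 + 12*V) := mul_le_mul_of_nonneg_left hsqrt hM.le


/-- Theorem 1.1 (lower bound) / Corollary 3.2: for any integer-valued random
variable `X` with finite variance, `M(X) ≥ 1/√(1 + 12·Var(X))`; equivalently,
`1 ≤ N_∞(X) = M(X)⁻² ≤ 1 + 12·Var(X)`. -/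
theorem maxProb_lower_bound_of_variance
    {Ω : Type*} [MeasurableSpace Ω] (μ : Measure Ω) [IsProbabilityMeasure μ]
    (X : Ω → ℤ) (hX : Measurable X)
    (hvar : MemLp (fun ω => (X ω : ℝ)) 2 μ) :
    maxProb μ X ≤ 1 ∧
      1 / Real.sqrt (1 + 12 * variance (fun ω => (X ω : ℝ)) μ) ≤ maxProb μ X := by
  -- basic pmf facts
  have hp1k : ∀ k : ℤ, pmfOf μ X k ≤ 1 := by
    intro k
    have h := ENNReal.toReal_mono ENNReal.one_ne_top (prob_le_one (μ := μ) (s := X ⁻¹' {k}))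
    simpa [pmfOf] using h
  have hbdd : BddAbove (Set.range (pmfOf μ X)) := ⟨1, by rintro x ⟨k, rfl⟩; exact hp1k k⟩
  set M : ℝ := maxProb μ X with hMdef
  have hpM : ∀ k : ℤ, pmfOf μ X k ≤ M := fun k => le_ciSup hbdd k
  have hM1 : M ≤ 1 := ciSup_le hp1k
  -- positivity of M
  have hcover : (⋃ k : ℤ, X ⁻¹' {k}) = Set.univ := by
    ext ω; simp
  have hdisj : Pairwise (Function.onFun Disjoint fun k : ℤ => X ⁻¹' {k}) := by
    intro i j hij
    simp only [Function.onFun, Set.disjoint_left, Set.mem_preimage, Set.mem_singleton_iff]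
    intro ω h1 h2
    exact hij (h1 ▸ h2 ▸ rfl)
  have hsum1 : ∑' k : ℤ, μ (X ⁻¹' {k}) = 1 := by
    rw [← measure_iUnion hdisj (fun k => hX (measurableSet_singleton k)), hcover, measure_univ]
  have hex : ∃ k : ℤ, μ (X ⁻¹' {k}) ≠ 0 := by
    by_contra h
    push_neg at h
    simp [h] at hsum1
  obtain ⟨k0, hk0⟩ := hex
  have hMpos : 0 < M :=
    lt_of_lt_of_le (ENNReal.toReal_pos hk0 (measure_ne_top μ _)) (hpM k0)
  -- mean and variance
  set m : ℝ := ∫ ω, (X ω : ℝ) ∂μ with hmdef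
  set V : ℝ := variance (fun ω => (X ω : ℝ)) μ with hVdef
  have hV0 : 0 ≤ V := variance_nonneg _ _
  have hsub : MemLp (fun ω => (X ω : ℝ) - m) 2 μ := hvar.sub (memLp_const m)
  have hIntSq : Integrable (fun ω => ((X ω : ℝ) - m)^2) μ := hsub.integrable_sq
  have hVeq : V = ∫ ω, ((X ω : ℝ) - m)^2 ∂μ := by
    rw [hVdef, variance_eq_integral hvar.aemeasurable]
  -- n and a
  set n : ℕ := ⌊1/M⌋₊ with hndef
  have hone_le : (1:ℝ) ≤ 1/M := one_le_one_div hMpos hM1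
  have hn1 : 1 ≤ n := Nat.le_floor (by exact_mod_cast hone_le)
  have hn1R : (1:ℝ) ≤ (n:ℝ) := by exact_mod_cast hn1
  have hnM : (n:ℝ) * M ≤ 1 := by
    have := Nat.floor_le (le_trans zero_le_one hone_le)
    calc (n:ℝ) * M ≤ (1/M) * M := by
          exact mul_le_mul_of_nonneg_right this hMpos.le
      _ = 1 := by field_simp
  have hnM2 : 1 ≤ ((n:ℝ)+1) * M := by
    have h := Nat.lt_floor_add_one (1/M)
    have : 1/M ≤ (n:ℝ) + 1 := by exact_mod_cast h.le
    calc (1:ℝ) = (1/M) * M := by field_simp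
      _ ≤ ((n:ℝ)+1) * M := mul_le_mul_of_nonneg_right this hMpos.le
  set a : ℤ := ⌈m - (n:ℝ)/2⌉ with hadef
  set p' : ℝ := m - (a:ℝ) with hp'def
  have hp'2 : p' ≤ (n:ℝ)/2 := by
    have := Int.le_ceil (m - (n:ℝ)/2)
    rw [hp'def]; linarith
  have hp'1 : (n:ℝ)/2 - 1 ≤ p' := by
    have := Int.ceil_lt_add_one (m - (n:ℝ)/2)
    rw [hp'def]; linarith
  set t : ℝ := min ((p'+1)^2) (((n:ℝ)-p')^2) with htdef
  -- the finite window
  set F : Finset ℤ := (Finset.range n).image (fun j : ℕ => a + (j:ℤ)) with hFdef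
  have hmemF : ∀ k : ℤ, k ∈ F ↔ a ≤ k ∧ k < a + n := by
    intro k
    simp only [hFdef, Finset.mem_image, Finset.mem_range]
    constructor
    · rintro ⟨j, hj, rfl⟩; omega
    · rintro ⟨h1, h2⟩; exact ⟨(k - a).toNat, by omega, by omega⟩
  have hA : ∀ k ∈ F, ((k:ℝ) - m)^2 ≤ t := by
    intro k hk
    rw [hmemF] at hk
    have h1 : (a:ℝ) ≤ (k:ℝ) := by exact_mod_cast hk.1
    have h2 : (k:ℝ) ≤ (a:ℝ) + (n:ℝ) - 1 := by
      have hkz : k ≤ a + (n:ℤ) - 1 := by omega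
      exact_mod_cast hkz
    refine le_min (sq_le_sq' ?_ ?_) (sq_le_sq' ?_ ?_) <;> linarith
  have hB : ∀ k : ℤ, k ∉ F → t ≤ ((k:ℝ) - m)^2 := by
    intro k hk
    rw [hmemF] at hk
    push_neg at hk
    rcases lt_or_ge k a with hka | hka
    · have h1 : (k:ℝ) ≤ (a:ℝ) - 1 := by
        have hkz : k ≤ a - 1 := by omega
        exact_mod_cast hkz
      have h0 : 0 ≤ p' + 1 := by linarith
      have hle : p' + 1 ≤ m - (k:ℝ) := by linarith
      calc t ≤ (p'+1)^2 := min_le_left _ _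
        _ ≤ (m - (k:ℝ))^2 := by nlinarith
        _ = ((k:ℝ) - m)^2 := by ring
    · have hkn := hk hka
      have h1 : (a:ℝ) + (n:ℝ) ≤ (k:ℝ) := by exact_mod_cast hkn
      have h0 : 0 ≤ (n:ℝ) - p' := by linarith
      have hle : (n:ℝ) - p' ≤ (k:ℝ) - m := by linarith
      calc t ≤ ((n:ℝ)-p')^2 := min_le_right _ _
        _ ≤ ((k:ℝ) - m)^2 := by nlinarith
  -- pointwise bound
  set G : Ω → ℝ := fun ω => ∑ k ∈ F, Set.indicator (X ⁻¹' {k}) (fun _ => t - ((k:ℝ) - m)^2) ω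
    with hGdef
  have hGval : ∀ ω, G ω = if X ω ∈ F then t - ((X ω : ℝ) - m)^2 else 0 := by
    intro ω
    classical
    rw [hGdef]
    simp [Set.indicator_apply, Set.mem_preimage, Set.mem_singleton_iff, Finset.sum_ite_eq]
  have hpoint : ∀ ω, t - ((X ω : ℝ) - m)^2 ≤ G ω := by
    intro ω
    rw [hGval ω]
    split_ifs with h
    · exact le_refl _
    · have := hB _ h
      linarith
  have hIntL : Integrable (fun ω => t - ((X ω : ℝ) - m)^2) μ := (integrable_const t).sub hIntSq
  have hIntG : Integrable G μ := by
    apply integrable_finset_sum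
    intro k _
    exact (integrable_const _).indicator (hX (measurableSet_singleton k))
  have hGint : ∫ ω, G ω ∂μ = ∑ k ∈ F, pmfOf μ X k * (t - ((k:ℝ) - m)^2) := by
    rw [hGdef, integral_finset_sum F
      (fun k _ => (integrable_const _).indicator (hX (measurableSet_singleton k)))]
    refine Finset.sum_congr rfl (fun k _ => ?_)
    rw [integral_indicator_const _ (hX (measurableSet_singleton k))]
    simp [pmfOf, smul_eq_mul, measureReal_def]
  have hstep : t - V ≤ M * ∑ k ∈ F, (t - ((k:ℝ) - m)^2) := by
    have h1 : t - V = ∫ ω, (t - ((X ω : ℝ) - m)^2) ∂μ := by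
      rw [integral_sub (integrable_const t) hIntSq, integral_const, hVeq]
      simp
    have h2 := integral_mono hIntL hIntG hpoint
    have h3 : ∑ k ∈ F, pmfOf μ X k * (t - ((k:ℝ) - m)^2)
        ≤ ∑ k ∈ F, M * (t - ((k:ℝ) - m)^2) := by
      refine Finset.sum_le_sum (fun k hk => ?_)
      have hnn : 0 ≤ t - ((k:ℝ) - m)^2 := by have := hA k hk; linarith
      exact mul_le_mul_of_nonneg_right (hpM k) hnn
    rw [h1]
    calc ∫ ω, (t - ((X ω : ℝ) - m)^2) ∂μ ≤ ∫ ω, G ω ∂μ := h2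
      _ = ∑ k ∈ F, pmfOf μ X k * (t - ((k:ℝ) - m)^2) := hGint
      _ ≤ ∑ k ∈ F, M * (t - ((k:ℝ) - m)^2) := h3
      _ = M * ∑ k ∈ F, (t - ((k:ℝ) - m)^2) := (Finset.mul_sum _ _ _).symm
  -- compute the finite sum
  have hsumF : ∑ k ∈ F, (t - ((k:ℝ) - m)^2)
      = (n:ℝ)*t - ((n:ℝ)*p'^2 - (n:ℝ)*((n:ℝ)-1)*p' + (n:ℝ)*((n:ℝ)-1)*(2*(n:ℝ)-1)/6) := by
    rw [hFdef, Finset.sum_image (by intro i _ j _ h; have h' : a + (i:ℤ) = a + (j:ℤ) := h; omega)]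
    have hterm : ∀ j ∈ Finset.range n,
        (t - (((a + (j:ℤ) : ℤ):ℝ) - m)^2) = t - ((j:ℝ) - p')^2 := by
      intro j _
      rw [hp'def]
      push_cast
      ring
    rw [Finset.sum_congr rfl hterm, Finset.sum_sub_distrib, Finset.sum_const,
      Finset.card_range, sumsq, nsmul_eq_mul]
  clear_value t p' a n V m M
  have hdual : (1 - M^2)/(12*M^2) ≤ V := by
    have hkey := keyFinal M (n:ℝ) p' hMpos hM1 hn1R hnM hnM2 hp'1 hp'2
    rw [hsumF] at hstep
    rw [htdef] at hstep
    nlinarith [hkey, hstep]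
  exact ⟨hM1, endgame M V hMpos hV0 hdual⟩
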